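/- On m = 3 qubits (N = 8), let E_1 = E(010,010), E_2 = E(011,001), E_3 = E(001,111), E_4 = E(101,011), and W = (E_1 + E_2 + E_3 + E_4)/2. Then W is unitary, W is not a Clifford matrix, and W does not belong to any level C^(k) of the Clifford hierarchy; in particular the union of all levels of the Clifford hierarchy is a proper subset of the unitary group U(8). -/

import Mathlib

open Matrix
open scoped Classical

noncomputable section

abbrev V (m : ℕ) := Fin m → ZMod 2

/-- Integer dot product of two binary vectors (using {0,1} representatives). -/
def dotN {m : ℕ} (a b : V m) : ℕ := ∑ i, (a i).val * (b i).val

/-- The matrix `D(a,b)` with `D(a,b)|v⟩ = (−1)^{b·v}|v⊕a⟩`. -/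
def DM {m : ℕ} (a b : V m) : Matrix (V m) (V m) ℂ :=
  Matrix.of fun u v => if u = v + a then (-1 : ℂ) ^ dotN b v else 0

/-- The Hermitian Pauli `E(a,b) = i^{a·b mod 4} D(a,b)`, for `c = (a,b) ∈ F_2^{2m}`. -/
def EM {m : ℕ} (c : V m × V m) : Matrix (V m) (V m) ℂ :=
  Complex.I ^ dotN c.1 c.2 • DM c.1 c.2

/-- The Heisenberg–Weyl group `HW_N = {i^k D(a,b)}`, as a set of matrices. -/
def HW (m : ℕ) : Set (Matrix (V m) (V m) ℂ) :=
  {M | ∃ (k : Fin 4) (a b : V m), M = Complex.I ^ (k : ℕ) • DM a b}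

/-- A Clifford matrix: a unitary normalizing the Heisenberg–Weyl group. -/
def IsClifford {m : ℕ} (G : Matrix (V m) (V m) ℂ) : Prop :=
  G ∈ Matrix.unitaryGroup (V m) ℂ ∧ ∀ W ∈ HW m, G * W * Gᴴ ∈ HW m

/-- The (Pauli/Weyl) support of a matrix, identified with vectors in `F_2^{2m}`. -/
def supp {m : ℕ} (M : Matrix (V m) (V m) ℂ) : Set (V m × V m) :=
  {c | Matrix.trace ((EM c)ᴴ * M) ≠ 0}

/-- The symplectic inner product on `F_2^{2m}`. -/
def sympl {m : ℕ} (u v : V m × V m) : ZMod 2 :=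
  ∑ i, (u.1 i * v.2 i + u.2 i * v.1 i)

/-- The Clifford hierarchy; `CH m k` is the `(k+1)`-st level `C^(k+1)`, so
`CH m 0 = HW_N = C^(1)` and `C^(3) = CH m 2`. -/
def CH (m : ℕ) : ℕ → Set (Matrix (V m) (V m) ℂ)
  | 0 => HW m
  | k + 1 => {U | U ∈ Matrix.unitaryGroup (V m) ℂ ∧ ∀ W ∈ HW m, U * W * Uᴴ ∈ CH m k}


/-! ### Auxiliary lemmas -/

lemma neg_one_pow_congr_mod2 {n k : ℕ} (h : n % 2 = k % 2) : (-1:ℂ)^n = (-1:ℂ)^k := by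
  conv_lhs => rw [← Nat.div_add_mod n 2]
  conv_rhs => rw [← Nat.div_add_mod k 2]
  rw [pow_add, pow_add, pow_mul, pow_mul, neg_one_sq, one_pow, one_pow, h]

lemma dotN_cast {m : ℕ} (a b : V m) : ((dotN a b : ℕ) : ZMod 2) = ∑ i, a i * b i := by
  simp [dotN, ZMod.natCast_val, ZMod.cast_id]

lemma dotN_mod {m : ℕ} {a b c d : V m} {e f : V m}
    (h : (∑ i, a i * b i) = (∑ i, c i * d i) + (∑ i, e i * f i)) :
    dotN a b % 2 = (dotN c d + dotN e f) % 2 := by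
  apply (ZMod.natCast_eq_natCast_iff _ _ _).1
  push_cast
  rw [dotN_cast, dotN_cast, dotN_cast, h]

lemma dotN_comm {m : ℕ} (a b : V m) : dotN a b = dotN b a := by
  simp [dotN, mul_comm]

lemma neg_one_pow_dotN_add_right {m : ℕ} (b x y : V m) :
    ((-1:ℂ)) ^ dotN b (x+y) = (-1)^ dotN b x * (-1)^ dotN b y := by
  rw [← pow_add]
  apply neg_one_pow_congr_mod2
  apply dotN_mod
  simp [mul_add, Finset.sum_add_distrib]

lemma neg_one_pow_dotN_add_left {m : ℕ} (x y b : V m) :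
    ((-1:ℂ)) ^ dotN (x+y) b = (-1)^ dotN x b * (-1)^ dotN y b := by
  rw [dotN_comm, dotN_comm x b, dotN_comm y b]; exact neg_one_pow_dotN_add_right b x y

lemma vadd_self {m : ℕ} (a : V m) : a + a = 0 := by
  funext i; exact CharTwo.add_self_eq_zero (a i)

lemma DM_mul {m : ℕ} (a b a' b' : V m) :
    DM a b * DM a' b' = ((-1:ℂ) ^ dotN b a') • DM (a+a') (b+b') := by
  ext u v
  rw [Matrix.mul_apply, Matrix.smul_apply, smul_eq_mul]
  rw [Finset.sum_eq_single (v + a')]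
  · have hcond : (u = (v + a') + a) ↔ (u = v + (a + a')) := by
      rw [add_assoc, add_comm a' a]
    simp only [DM, Matrix.of_apply]
    rw [if_pos trivial]
    by_cases hc : u = v + (a + a')
    · rw [if_pos (hcond.2 hc), if_pos hc, neg_one_pow_dotN_add_right, neg_one_pow_dotN_add_left]
      ring
    · rw [if_neg (fun h => hc (hcond.1 h)), if_neg hc, zero_mul, mul_zero]
  · intro w _ hw
    simp only [DM, Matrix.of_apply]
    rw [if_neg hw, mul_zero]
  · intro h; exact absurd (Finset.mem_univ _) h

lemma dotN_zero_left {m : ℕ} (b : V m) : dotN 0 b = 0 := by simp [dotN]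
lemma dotN_zero_right {m : ℕ} (b : V m) : dotN b 0 = 0 := by simp [dotN]

lemma DM_zero {m : ℕ} : DM (0 : V m) 0 = 1 := by
  ext u v
  simp [DM, dotN_zero_left, Matrix.one_apply, eq_comm]

lemma DM_conjTranspose {m : ℕ} (a b : V m) :
    (DM a b)ᴴ = ((-1:ℂ) ^ dotN b a) • DM a b := by
  ext u v
  rw [Matrix.conjTranspose_apply, Matrix.smul_apply, smul_eq_mul]
  simp only [DM, Matrix.of_apply]
  have hcond : (v = u + a) ↔ (u = v + a) := by
    constructor <;> (intro h; rw [h, add_assoc, vadd_self, add_zero])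
  by_cases hc : u = v + a
  · rw [if_pos (hcond.2 hc), if_pos hc]
    have : (-1:ℂ) ^ dotN b u = (-1)^ dotN b v * (-1)^ dotN b a := by
      rw [hc, neg_one_pow_dotN_add_right]
    simp [this]
    ring
  · rw [if_neg (fun h => hc (hcond.1 h)), if_neg hc, star_zero, mul_zero]

lemma I_pow_mod4 (n : ℕ) : Complex.I ^ n = Complex.I ^ (n % 4) := by
  conv_lhs => rw [← Nat.div_add_mod n 4]
  rw [pow_add, pow_mul, Complex.I_pow_four, one_pow, one_mul]

lemma smul_DM_mem_HW {m : ℕ} (t : ℕ) (a b : V m) : (Complex.I ^ t • DM a b) ∈ HW m := by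
  refine ⟨⟨t % 4, Nat.mod_lt _ (by norm_num)⟩, a, b, ?_⟩
  rw [I_pow_mod4]

lemma neg_one_pow_eq_I_pow (n : ℕ) : ((-1:ℂ)) ^ n = Complex.I ^ (2 * n) := by
  rw [pow_mul, Complex.I_sq]

lemma EM_eq_I_pow_smul {m : ℕ} (c : V m × V m) :
    EM c = Complex.I ^ dotN c.1 c.2 • DM c.1 c.2 := rfl

lemma EM_mem_HW {m : ℕ} (c : V m × V m) : EM c ∈ HW m := smul_DM_mem_HW _ _ _

lemma HW_mul {m : ℕ} {M M' : Matrix (V m) (V m) ℂ} (h : M ∈ HW m) (h' : M' ∈ HW m) :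
    M * M' ∈ HW m := by
  obtain ⟨k, a, b, rfl⟩ := h
  obtain ⟨k', a', b', rfl⟩ := h'
  rw [Matrix.smul_mul, Matrix.mul_smul, smul_smul, ← pow_add, DM_mul, smul_smul,
    neg_one_pow_eq_I_pow, ← pow_add]
  exact smul_DM_mem_HW _ _ _

lemma HW_star {m : ℕ} {M : Matrix (V m) (V m) ℂ} (h : M ∈ HW m) : Mᴴ ∈ HW m := by
  obtain ⟨k, a, b, rfl⟩ := h
  rw [Matrix.conjTranspose_smul, DM_conjTranspose, smul_smul]
  have hstar : star (Complex.I ^ (k:ℕ)) = Complex.I ^ (3 * (k:ℕ)) := by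
    rw [star_pow, Complex.star_def, Complex.conj_I, pow_mul]
    norm_num [pow_succ, Complex.I_sq]
  rw [hstar, neg_one_pow_eq_I_pow, ← pow_add]
  exact smul_DM_mem_HW _ _ _

lemma HW_unitary {m : ℕ} {M : Matrix (V m) (V m) ℂ} (h : M ∈ HW m) :
    M ∈ Matrix.unitaryGroup (V m) ℂ := by
  rw [Matrix.mem_unitaryGroup_iff]
  obtain ⟨k, a, b, rfl⟩ := h
  rw [Matrix.star_eq_conjTranspose, Matrix.conjTranspose_smul, DM_conjTranspose,
    Matrix.smul_mul, Matrix.mul_smul, Matrix.mul_smul, DM_mul, vadd_self, vadd_self, DM_zero,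
    smul_smul, smul_smul, smul_smul]
  have hstar : star (Complex.I ^ (k:ℕ)) = (-Complex.I) ^ (k:ℕ) := by
    rw [star_pow, Complex.star_def, Complex.conj_I]
  rw [hstar]
  have : Complex.I ^ (k:ℕ) * (-Complex.I) ^ (k:ℕ) * (-1:ℂ) ^ dotN b a * (-1) ^ dotN b a = 1 := by
    rw [← mul_pow, mul_assoc, ← mul_pow]
    norm_num
  rw [this, one_smul]

lemma HW_conj {m : ℕ} {P M : Matrix (V m) (V m) ℂ} (hP : P ∈ HW m) (hM : M ∈ HW m) :
    P * M * Pᴴ ∈ HW m := HW_mul (HW_mul hP hM) (HW_star hP)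

lemma CH_subset_unitary {m : ℕ} : ∀ k, CH m k ⊆ Matrix.unitaryGroup (V m) ℂ
  | 0 => fun _ h => HW_unitary h
  | (_+1) => fun _ h => h.1

lemma pauli_conj_CH {m : ℕ} : ∀ (k : ℕ) (U P P' : Matrix (V m) (V m) ℂ),
    U ∈ CH m k → P ∈ HW m → P' ∈ HW m → P * U * P' ∈ CH m k := by
  intro k
  induction k with
  | zero => intro U P P' hU hP hP'; exact HW_mul (HW_mul hP hU) hP'
  | succ k ih =>
    intro U P P' hU hP hP'
    obtain ⟨hu, hc⟩ := hU
    refine ⟨mul_mem (mul_mem (HW_unitary hP) hu) (HW_unitary hP'), ?_⟩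
    intro X hX
    have heq : (P * U * P') * X * (P * U * P')ᴴ
        = P * (U * (P' * X * P'ᴴ) * Uᴴ) * Pᴴ := by
      simp only [Matrix.conjTranspose_mul]
      noncomm_ring
    rw [heq]
    exact ih _ _ _ (hc _ (HW_conj hP' hX)) hP (HW_star hP)

lemma EM_mul_EM {m : ℕ} (c c' : V m × V m) :
    EM c * EM c' = (Complex.I ^ (dotN c.1 c.2 + dotN c'.1 c'.2) * (-1:ℂ) ^ dotN c.2 c'.1) •
      DM (c.1 + c'.1) (c.2 + c'.2) := by
  rw [EM_eq_I_pow_smul, EM_eq_I_pow_smul, Matrix.smul_mul, Matrix.mul_smul, smul_smul,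
    ← pow_add, DM_mul, smul_smul]

lemma EM_sq {m : ℕ} (c : V m × V m) : EM c * EM c = 1 := by
  rw [EM_mul_EM, vadd_self, vadd_self, DM_zero]
  have h1 : Complex.I ^ (dotN c.1 c.2 + dotN c.1 c.2) = (-1:ℂ) ^ dotN c.1 c.2 := by
    rw [← two_mul, pow_mul, Complex.I_sq]
  rw [h1, dotN_comm c.2 c.1, ← mul_pow]
  norm_num

lemma EM_conjTranspose {m : ℕ} (c : V m × V m) : (EM c)ᴴ = EM c := by
  rw [EM_eq_I_pow_smul, Matrix.conjTranspose_smul, DM_conjTranspose, smul_smul]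
  have hstar : star (Complex.I ^ dotN c.1 c.2)
      = (-1:ℂ) ^ dotN c.1 c.2 * Complex.I ^ dotN c.1 c.2 := by
    rw [star_pow, Complex.star_def, Complex.conj_I, ← mul_pow]
    congr 1; ring
  rw [hstar, dotN_comm c.2 c.1]
  congr 1
  have : ((-1:ℂ)) ^ dotN c.1 c.2 * (-1) ^ dotN c.1 c.2 = 1 := by
    rw [← mul_pow]; norm_num
  calc (-1:ℂ) ^ dotN c.1 c.2 * Complex.I ^ dotN c.1 c.2 * (-1) ^ dotN c.1 c.2
      = ((-1:ℂ) ^ dotN c.1 c.2 * (-1) ^ dotN c.1 c.2) * Complex.I ^ dotN c.1 c.2 := by ring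
    _ = Complex.I ^ dotN c.1 c.2 := by rw [this, one_mul]

lemma EM_anticomm {m : ℕ} {c c' : V m × V m}
    (h : (dotN c.2 c'.1 + dotN c'.2 c.1) % 2 = 1) :
    EM c * EM c' = -(EM c' * EM c) := by
  rw [EM_mul_EM, EM_mul_EM, add_comm c'.1 c.1, add_comm c'.2 c.2, add_comm (dotN c'.1 c'.2),
    ← neg_smul]
  congr 1
  have : (-1:ℂ) ^ dotN c.2 c'.1 = -(-1:ℂ) ^ dotN c'.2 c.1 := by
    have h2 : dotN c.2 c'.1 % 2 = (dotN c'.2 c.1 + 1) % 2 := by omega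
    rw [neg_one_pow_congr_mod2 h2, pow_succ]
    ring
  rw [this]; ring

lemma EM_comm {m : ℕ} {c c' : V m × V m}
    (h : (dotN c.2 c'.1 + dotN c'.2 c.1) % 2 = 0) :
    EM c * EM c' = EM c' * EM c := by
  rw [EM_mul_EM, EM_mul_EM, add_comm c'.1 c.1, add_comm c'.2 c.2, add_comm (dotN c'.1 c'.2)]
  congr 2
  apply neg_one_pow_congr_mod2
  omega

lemma not_mem_HW_of_entries {M : Matrix (V 3) (V 3) ℂ} {u u' v : V 3} (hne : u ≠ u')
    (h1 : M u v ≠ 0) (h2 : M u' v ≠ 0) : M ∉ HW 3 := by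
  rintro ⟨k, a, b, rfl⟩
  have g1 : u = v + a := by
    by_contra hc
    exact h1 (by simp [DM, Matrix.smul_apply, hc])
  have g2 : u' = v + a := by
    by_contra hc
    exact h2 (by simp [DM, Matrix.smul_apply, hc])
  exact hne (g1.trans g2.symm)

lemma EM_apply_col0 {m : ℕ} (c : V m × V m) (u : V m) :
    EM c u (0 : V m) = if u = c.1 then Complex.I ^ dotN c.1 c.2 else 0 := by
  rw [EM_eq_I_pow_smul, Matrix.smul_apply, smul_eq_mul]
  simp only [DM, Matrix.of_apply, zero_add, dotN_zero_right, pow_zero]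
  split_ifs <;> ring

def pc1 : V 3 × V 3 := (![0,1,0], ![0,1,0])
def pc2 : V 3 × V 3 := (![0,1,1], ![0,0,1])
def pc3 : V 3 × V 3 := (![0,0,1], ![1,1,1])
def pc4 : V 3 × V 3 := (![1,0,1], ![0,1,1])
def pcq : V 3 × V 3 := (![1,1,0], ![1,0,0])


/-- on `m = 3` qubits, `W = (E(010,010)+E(011,001)+E(001,111)+E(101,011))/2`
is unitary, is not Clifford, and lies in no level of the Clifford hierarchy; hence the
union of all levels is a proper subset of the unitary group `U(8)`. -/

theorem stmt17 :
    ∀ W : Matrix (V 3) (V 3) ℂ,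
      W = (2 : ℂ)⁻¹ • (EM (![0,1,0], ![0,1,0]) + EM (![0,1,1], ![0,0,1]) +
        EM (![0,0,1], ![1,1,1]) + EM (![1,0,1], ![0,1,1])) →
      W ∈ Matrix.unitaryGroup (V 3) ℂ ∧
      ¬ (∀ X ∈ HW 3, W * X * Wᴴ ∈ HW 3) ∧
      (∀ k : ℕ, W ∉ CH 3 k) ∧
      (⋃ k : ℕ, CH 3 k) ⊂ {U : Matrix (V 3) (V 3) ℂ | U ∈ Matrix.unitaryGroup (V 3) ℂ} := by
  
  intro W hW
  have hW' : W = (2 : ℂ)⁻¹ • (EM pc1 + EM pc2 + EM pc3 + EM pc4) := hW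
  clear hW
  -- abbreviations
  set S : Matrix (V 3) (V 3) ℂ := EM pc1 + EM pc2 + EM pc3 + EM pc4 with hSdef
  set Q : Matrix (V 3) (V 3) ℂ := EM pcq with hQdef
  -- (anti)commutation facts
  have a21 : EM pc2 * EM pc1 = -(EM pc1 * EM pc2) := EM_anticomm (by decide)
  have a31 : EM pc3 * EM pc1 = -(EM pc1 * EM pc3) := EM_anticomm (by decide)
  have a41 : EM pc4 * EM pc1 = -(EM pc1 * EM pc4) := EM_anticomm (by decide)
  have a32 : EM pc3 * EM pc2 = -(EM pc2 * EM pc3) := EM_anticomm (by decide)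
  have a42 : EM pc4 * EM pc2 = -(EM pc2 * EM pc4) := EM_anticomm (by decide)
  have a43 : EM pc4 * EM pc3 = -(EM pc3 * EM pc4) := EM_anticomm (by decide)
  have aQ1 : Q * EM pc1 = -(EM pc1 * Q) := EM_anticomm (by decide)
  have cQ2 : Q * EM pc2 = EM pc2 * Q := EM_comm (by decide)
  have cQ3 : Q * EM pc3 = EM pc3 * Q := EM_comm (by decide)
  have cQ4 : Q * EM pc4 = EM pc4 * Q := EM_comm (by decide)
  have e1 := EM_sq pc1
  have e2 := EM_sq pc2
  have e3 := EM_sq pc3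
  have e4 := EM_sq pc4
  have eQ : Q * Q = 1 := EM_sq pcq
  -- core algebraic identities
  have hSS : S * S = (4:ℂ) • 1 := by
    rw [hSdef]
    simp only [add_mul, mul_add, e1, e2, e3, e4, a21, a31, a41, a32, a42, a43]
    module
  have hWH : Wᴴ = W := by
    rw [hW']
    simp [Matrix.conjTranspose_smul, Matrix.conjTranspose_add, EM_conjTranspose, hSdef]
  have hW2 : W * W = 1 := by
    rw [hW', Matrix.smul_mul, Matrix.mul_smul, smul_smul, hSS, smul_smul]
    norm_num
  have hWunit : W ∈ Matrix.unitaryGroup (V 3) ℂ := by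
    rw [Matrix.mem_unitaryGroup_iff, Matrix.star_eq_conjTranspose, hWH, hW2]
  have hSE1 : S * EM pc1 = (2:ℂ) • 1 - EM pc1 * S := by
    rw [hSdef]
    simp only [add_mul, mul_add, e1, a21, a31, a41]
    module
  have hSE1S : S * EM pc1 * S = (2:ℂ) • S - (4:ℂ) • EM pc1 := by
    rw [hSE1, sub_mul, Matrix.smul_mul, one_mul, mul_assoc, hSS, Matrix.mul_smul, mul_one]
  have hWE1W : W * EM pc1 * W = W - EM pc1 := by
    rw [hW']
    simp only [Matrix.smul_mul, Matrix.mul_smul, smul_smul]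
    rw [hSE1S, smul_sub, smul_smul, smul_smul]
    norm_num
  have hQSQ : Q * S * Q = S - (2:ℂ) • EM pc1 := by
    rw [hSdef]
    simp only [mul_add, add_mul, aQ1, cQ2, cQ3, cQ4, neg_mul, mul_assoc, eQ, mul_one]
    module
  have hQWQ : Q * (W - EM pc1) * Q = W := by
    have hQE1Q : Q * EM pc1 * Q = -(EM pc1) := by
      rw [aQ1, neg_mul, mul_assoc, eQ, mul_one]
    rw [mul_sub, sub_mul, hQE1Q]
    have : Q * W * Q = W - EM pc1 := by
      rw [hW', Matrix.mul_smul, Matrix.smul_mul, hQSQ, smul_sub, smul_smul]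
      norm_num
    rw [this]
    abel
  -- entries of W and W - E1 in column 0
  have hEnt : ∀ u : V 3, W u 0 = (2:ℂ)⁻¹ *
      ((if u = ![0,1,0] then Complex.I else 0) + (if u = ![0,1,1] then Complex.I else 0) +
       (if u = ![0,0,1] then Complex.I else 0) + (if u = ![1,0,1] then Complex.I else 0)) := by
    intro u
    rw [hW', hSdef, Matrix.smul_apply, Matrix.add_apply, Matrix.add_apply, Matrix.add_apply,
      EM_apply_col0, EM_apply_col0, EM_apply_col0, EM_apply_col0, smul_eq_mul]
    have d1 : dotN (pc1.1) (pc1.2) = 1 := by decide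
    have d2 : dotN (pc2.1) (pc2.2) = 1 := by decide
    have d3 : dotN (pc3.1) (pc3.2) = 1 := by decide
    have d4 : dotN (pc4.1) (pc4.2) = 1 := by decide
    rw [d1, d2, d3, d4, pow_one]
    rfl
  have hI2 : Complex.I / 2 ≠ 0 := by
    simp [Complex.I_ne_zero]
  have hWa1 : W ![0,1,0] 0 ≠ 0 := by
    rw [hEnt]
    have h1 : (![0,1,0] : V 3) = ![0,1,0] := rfl
    have h2 : ¬((![0,1,0] : V 3) = ![0,1,1]) := by decide
    have h3 : ¬((![0,1,0] : V 3) = ![0,0,1]) := by decide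
    have h4 : ¬((![0,1,0] : V 3) = ![1,0,1]) := by decide
    rw [if_pos h1, if_neg h2, if_neg h3, if_neg h4]
    simpa using hI2
  have hWa2 : W ![0,1,1] 0 ≠ 0 := by
    rw [hEnt]
    have h1 : ¬((![0,1,1] : V 3) = ![0,1,0]) := by decide
    have h2 : (![0,1,1] : V 3) = ![0,1,1] := rfl
    have h3 : ¬((![0,1,1] : V 3) = ![0,0,1]) := by decide
    have h4 : ¬((![0,1,1] : V 3) = ![1,0,1]) := by decide
    rw [if_neg h1, if_pos h2, if_neg h3, if_neg h4]
    simpa using hI2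
  have hWnotHW : W ∉ HW 3 :=
    not_mem_HW_of_entries (u := ![0,1,0]) (u' := ![0,1,1]) (v := 0) (by decide) hWa1 hWa2
  have hE1a2 : EM pc1 ![0,1,1] 0 = 0 := by
    rw [EM_apply_col0, if_neg (by decide)]
  have hE1a3 : EM pc1 ![0,0,1] 0 = 0 := by
    rw [EM_apply_col0, if_neg (by decide)]
  have hWa3 : W ![0,0,1] 0 ≠ 0 := by
    rw [hEnt]
    have h1 : ¬((![0,0,1] : V 3) = ![0,1,0]) := by decide
    have h2 : ¬((![0,0,1] : V 3) = ![0,1,1]) := by decide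
    have h3 : (![0,0,1] : V 3) = ![0,0,1] := rfl
    have h4 : ¬((![0,0,1] : V 3) = ![1,0,1]) := by decide
    rw [if_neg h1, if_neg h2, if_pos h3, if_neg h4]
    simpa using hI2
  have hWsubNotHW : W - EM pc1 ∉ HW 3 := by
    apply not_mem_HW_of_entries (u := ![0,1,1]) (u' := ![0,0,1]) (v := 0) (by decide)
    · rw [Matrix.sub_apply, hE1a2, sub_zero]; exact hWa2
    · rw [Matrix.sub_apply, hE1a3, sub_zero]; exact hWa3
  -- W is in no level of the hierarchy
  have hNoLevel : ∀ k : ℕ, W ∉ CH 3 k := by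
    intro k
    induction k with
    | zero => exact hWnotHW
    | succ k ih =>
      rintro ⟨-, hc⟩
      have h2 := hc (EM pc1) (EM_mem_HW pc1)
      rw [hWH, hWE1W] at h2
      have h3 := pauli_conj_CH k _ Q Q h2 (EM_mem_HW pcq) (EM_mem_HW pcq)
      rw [hQWQ] at h3
      exact ih h3
  refine ⟨hWunit, ?_, hNoLevel, ?_⟩
  · intro h
    have h2 := h (EM pc1) (EM_mem_HW pc1)
    rw [hWH, hWE1W] at h2
    exact hWsubNotHW h2
  · rw [Set.ssubset_def]
    constructor
    · intro x hx
      rw [Set.mem_iUnion] at hx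
      obtain ⟨k, hk⟩ := hx
      exact CH_subset_unitary k hk
    · intro h
      have h2 := h (show W ∈ {U : Matrix (V 3) (V 3) ℂ | U ∈ Matrix.unitaryGroup (V 3) ℂ} from hWunit)
      rw [Set.mem_iUnion] at h2
      obtain ⟨k, hk⟩ := h2
      exact hNoLevel k hk
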